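/- Let X ⊆ ℝⁿ be a polyhedral set and ψ(x) = max_{1≤i≤k₁} ψ₁ᵢ(x) − max_{1≤j≤k₂} ψ₂ⱼ(x), where every ψ₁ᵢ and ψ₂ⱼ is an (indefinite) quadratic function. Let D_F be the set of points at which the function x ↦ max_{1≤i≤k₁} ψ₁ᵢ(x) is Fréchet differentiable. Then the set ψ(D_{(ψ,X)} ∩ D_F) is finite. -/
import Mathlib


open Matrix Filter Topology

noncomputable def finMax {k : ℕ} (hk : 0 < k) (g : Fin k → ℝ) : ℝ :=
  Finset.univ.sup' (Finset.univ_nonempty_iff.mpr ⟨⟨0, hk⟩⟩) g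

/-- The one-sided directional derivative of `ψ` at `x` in direction `v` equals `L`. -/
def HasDirDeriv {n : ℕ} (ψ : (Fin n → ℝ) → ℝ) (x v : Fin n → ℝ) (L : ℝ) : Prop :=
  Filter.Tendsto (fun δ : ℝ => (ψ (x + δ • v) - ψ x) / δ) (nhdsWithin 0 (Set.Ioi 0)) (nhds L)

/-- `x₀` is a d(irectional)-stationary point of `ψ` on `X`. -/
def DStat {n : ℕ} (ψ : (Fin n → ℝ) → ℝ) (X : Set (Fin n → ℝ)) (x₀ : Fin n → ℝ) : Prop :=
  x₀ ∈ X ∧ ∀ x ∈ X, ∃ L, HasDirDeriv ψ x₀ (x - x₀) L ∧ 0 ≤ L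


/-- A polyhedral subset of ℝⁿ: solution set of finitely many linear inequalities. -/
def IsPolyhedral {n : ℕ} (X : Set (Fin n → ℝ)) : Prop :=
  ∃ (m : ℕ) (A : Fin m → Fin n → ℝ) (b : Fin m → ℝ), X = {x | ∀ i, A i ⬝ᵥ x ≤ b i}

/-! ### Auxiliary material -/

noncomputable def quadF {n : ℕ} (Q : Matrix (Fin n) (Fin n) ℝ) (q : Fin n → ℝ) (α : ℝ)
    (x : Fin n → ℝ) : ℝ :=
  (1/2) * (x ⬝ᵥ Q.mulVec x) + q ⬝ᵥ x + α

lemma dot_symm {n : ℕ} {Q : Matrix (Fin n) (Fin n) ℝ} (hQ : Q.IsSymm) (x y : Fin n → ℝ) :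
    x ⬝ᵥ Q.mulVec y = Q.mulVec x ⬝ᵥ y := by
  rw [Matrix.dotProduct_mulVec]
  congr 1
  rw [← hQ.eq, Matrix.vecMul_transpose, hQ.eq]

lemma quad_expand {n : ℕ} {Q : Matrix (Fin n) (Fin n) ℝ} (hQ : Q.IsSymm) (q : Fin n → ℝ)
    (α : ℝ) (x d : Fin n → ℝ) (t : ℝ) :
    quadF Q q α (x + t • d)
      = quadF Q q α x + t * ((Q.mulVec x + q) ⬝ᵥ d) + t^2 * ((1/2) * (d ⬝ᵥ Q.mulVec d)) := by
  simp only [quadF, Matrix.mulVec_add, Matrix.mulVec_smul, dotProduct_add,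
    add_dotProduct, dotProduct_smul, smul_dotProduct, smul_eq_mul,
    add_dotProduct]
  rw [dot_symm hQ x d, dotProduct_comm d (Q.mulVec x)]
  ring

section QP
variable {n m : ℕ} (A : Fin m → Fin n → ℝ) (b : Fin m → ℝ)

/-- Feasibility for the linear system `A x ≤ b`. -/
def Feas (A : Fin m → Fin n → ℝ) (b : Fin m → ℝ) (x : Fin n → ℝ) : Prop :=
  ∀ i, A i ⬝ᵥ x ≤ b i

lemma grad_perp {Q : Matrix (Fin n) (Fin n) ℝ} {q : Fin n → ℝ}
    {x y : Fin n → ℝ}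
    (hx : Feas A b x) (hy : Feas A b y)
    (hsx : ∀ z, Feas A b z → 0 ≤ (Q.mulVec x + q) ⬝ᵥ (z - x))
    (hact : ∀ i, A i ⬝ᵥ x = b i → A i ⬝ᵥ y = b i) :
    (Q.mulVec x + q) ⬝ᵥ (y - x) = 0 := by
  set d : Fin n → ℝ := y - x with hd
  have hge : 0 ≤ (Q.mulVec x + q) ⬝ᵥ d := hsx y hy
  -- find t < 0 with x + t • d feasible
  have hev : ∀ᶠ t : ℝ in 𝓝 0, Feas A b (x + t • d) := by
    simp only [Feas]
    rw [eventually_all]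
    intro i
    have hrew : ∀ t : ℝ, A i ⬝ᵥ (x + t • d) = A i ⬝ᵥ x + t * (A i ⬝ᵥ d) := by
      intro t; simp [dotProduct_add, dotProduct_smul]
    rcases lt_or_eq_of_le (hx i) with hlt | heq
    · have hcont : Tendsto (fun t : ℝ => A i ⬝ᵥ x + t * (A i ⬝ᵥ d)) (𝓝 0) (𝓝 (A i ⬝ᵥ x)) := by
        have : Tendsto (fun t : ℝ => A i ⬝ᵥ x + t * (A i ⬝ᵥ d)) (𝓝 0)
            (𝓝 (A i ⬝ᵥ x + 0 * (A i ⬝ᵥ d))) := by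
          exact (tendsto_const_nhds.add ((continuous_id.mul continuous_const).tendsto 0))
        simpa using this
      have := hcont.eventually_lt_const hlt
      filter_upwards [this] with t ht
      rw [hrew t]; exact le_of_lt ht
    · have hdz : A i ⬝ᵥ d = 0 := by
        have hy' : A i ⬝ᵥ y = b i := hact i heq
        simp [hd, dotProduct_sub, hy', heq]
      filter_upwards with t
      rw [hrew t, hdz, heq]; simp
  have hev' : ∀ᶠ t : ℝ in 𝓝[<] (0:ℝ), Feas A b (x + t • d) ∧ t < 0 :=
    ((hev.filter_mono nhdsWithin_le_nhds).and self_mem_nhdsWithin)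
  obtain ⟨t, htf, htneg⟩ := hev'.exists
  have h0 := hsx (x + t • d) htf
  have hxx : (x + t • d) - x = t • d := by abel
  rw [hxx, dotProduct_smul, smul_eq_mul] at h0
  nlinarith

lemma same_active_value {Q : Matrix (Fin n) (Fin n) ℝ} (hQ : Q.IsSymm) {q : Fin n → ℝ} {α : ℝ}
    {x y : Fin n → ℝ}
    (hx : Feas A b x) (hy : Feas A b y)
    (hsx : ∀ z, Feas A b z → 0 ≤ (Q.mulVec x + q) ⬝ᵥ (z - x))
    (hsy : ∀ z, Feas A b z → 0 ≤ (Q.mulVec y + q) ⬝ᵥ (z - y))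
    (hact : ∀ i, A i ⬝ᵥ x = b i ↔ A i ⬝ᵥ y = b i) :
    quadF Q q α x = quadF Q q α y := by
  have hpx : (Q.mulVec x + q) ⬝ᵥ (y - x) = 0 :=
    grad_perp A b hx hy hsx (fun i h => (hact i).mp h)
  have hpy : (Q.mulVec y + q) ⬝ᵥ (x - y) = 0 :=
    grad_perp A b hy hx hsy (fun i h => (hact i).mpr h)
  have e1 : quadF Q q α y = quadF Q q α x + 1 * ((Q.mulVec x + q) ⬝ᵥ (y - x))
      + 1^2 * ((1/2) * ((y - x) ⬝ᵥ Q.mulVec (y - x))) := by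
    have := quad_expand hQ q α x (y - x) 1
    simpa using this
  have e2 : quadF Q q α x = quadF Q q α y + 1 * ((Q.mulVec y + q) ⬝ᵥ (x - y))
      + 1^2 * ((1/2) * ((x - y) ⬝ᵥ Q.mulVec (x - y))) := by
    have := quad_expand hQ q α y (x - y) 1
    simpa using this
  have hnn : (x - y) ⬝ᵥ Q.mulVec (x - y) = (y - x) ⬝ᵥ Q.mulVec (y - x) := by
    have : x - y = -(y - x) := by abel
    rw [this, Matrix.mulVec_neg, dotProduct_neg, neg_dotProduct]
    ring
  rw [hpx] at e1; rw [hpy, hnn] at e2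
  linarith

lemma qp_values_finite (Q : Matrix (Fin n) (Fin n) ℝ) (hQ : Q.IsSymm) (q : Fin n → ℝ) (α : ℝ) :
    {r : ℝ | ∃ x, Feas A b x ∧ (∀ z, Feas A b z → 0 ≤ (Q.mulVec x + q) ⬝ᵥ (z - x))
      ∧ r = quadF Q q α x}.Finite := by
  classical
  set P : (Fin n → ℝ) → Prop := fun x => Feas A b x ∧
    (∀ z, Feas A b z → 0 ≤ (Q.mulVec x + q) ⬝ᵥ (z - x)) with hP
  set act : (Fin n → ℝ) → Set (Fin m) := fun x => {i | A i ⬝ᵥ x = b i} with hactdef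
  set F : Set (Fin m) → ℝ := fun I =>
    if h : ∃ x, P x ∧ act x = I then quadF Q q α h.choose else 0 with hF
  apply Set.Finite.subset (Set.finite_range F)
  rintro r ⟨x, hfeas, hstat, rfl⟩
  refine ⟨act x, ?_⟩
  have hex : ∃ z, P z ∧ act z = act x := ⟨x, ⟨hfeas, hstat⟩, rfl⟩
  have : F (act x) = quadF Q q α hex.choose := by rw [hF]; exact dif_pos hex
  rw [this]
  obtain ⟨⟨hf', hs'⟩, hact'⟩ := hex.choose_spec
  exact same_active_value A b hQ hf' hfeas hs' hstat
    (fun i => by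
      constructor
      · intro h; have : i ∈ act x := hact' ▸ (h : i ∈ act hex.choose); exact this
      · intro h; have : i ∈ act hex.choose := hact'.symm ▸ (h : i ∈ act x); exact this)

end QP

lemma qslope {n : ℕ} {Q : Matrix (Fin n) (Fin n) ℝ} (hQ : Q.IsSymm) (q : Fin n → ℝ) (α : ℝ)
    (x v : Fin n → ℝ) :
    Tendsto (fun δ : ℝ => (quadF Q q α (x + δ • v) - quadF Q q α x) / δ) (𝓝[>] 0)
      (𝓝 ((Q.mulVec x + q) ⬝ᵥ v)) := by
  have hcont : Tendsto (fun δ : ℝ => (Q.mulVec x + q) ⬝ᵥ v + δ * ((1/2) * (v ⬝ᵥ Q.mulVec v)))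
      (𝓝[>] (0:ℝ)) (𝓝 ((Q.mulVec x + q) ⬝ᵥ v)) := by
    have h : Tendsto (fun δ : ℝ => (Q.mulVec x + q) ⬝ᵥ v + δ * ((1/2) * (v ⬝ᵥ Q.mulVec v)))
        (𝓝 (0:ℝ)) (𝓝 ((Q.mulVec x + q) ⬝ᵥ v + 0 * ((1/2) * (v ⬝ᵥ Q.mulVec v)))) :=
      tendsto_const_nhds.add ((continuous_id.mul continuous_const).tendsto 0)
    simpa using h.mono_left nhdsWithin_le_nhds
  refine hcont.congr' ?_
  filter_upwards [self_mem_nhdsWithin] with δ hδ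
  have hδ0 : δ ≠ 0 := ne_of_gt hδ
  rw [quad_expand hQ q α x v δ]
  field_simp
  ring

lemma fderiv_slope {n : ℕ} {f : (Fin n → ℝ) → ℝ} {x : Fin n → ℝ}
    (hf : DifferentiableAt ℝ f x) (v : Fin n → ℝ) :
    Tendsto (fun δ : ℝ => (f (x + δ • v) - f x) / δ) (𝓝[>] 0) (𝓝 (fderiv ℝ f x v)) := by
  have h1 : HasDerivAt (fun δ : ℝ => x + δ • v) v 0 := by
    simpa using ((hasDerivAt_id (0:ℝ)).smul_const v).const_add x
  have h2 : HasDerivAt (fun δ : ℝ => f (x + δ • v)) (fderiv ℝ f x v) 0 := by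
    have hfd : HasFDerivAt f (fderiv ℝ f x) ((fun δ : ℝ => x + δ • v) 0) := by
      simpa using hf.hasFDerivAt
    exact hfd.comp_hasDerivAt 0 h1
  have h3 := hasDerivAt_iff_tendsto_slope.mp h2
  have h4 : Tendsto (slope (fun δ : ℝ => f (x + δ • v)) 0) (𝓝[>] 0) (𝓝 (fderiv ℝ f x v)) :=
    h3.mono_left (nhdsWithin_mono 0 (fun δ hδ => ne_of_gt hδ))
  refine h4.congr fun δ => ?_
  simp [slope_def_field]

/-- Corollary 5(b): for `ψ = max_i ψ₁ᵢ - max_j ψ₂ⱼ` with all pieces (indefinite)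
quadratic, `ψ` takes only finitely many values on `D_{(ψ,X)} ∩ D_F`, where `D_F` is the
set of Fréchet differentiability points of `x ↦ max_i ψ₁ᵢ(x)`. -/
theorem stmt_7 {n k₁ k₂ : ℕ} (hk₁ : 0 < k₁) (hk₂ : 0 < k₂)
    (X : Set (Fin n → ℝ)) (hX : IsPolyhedral X)
    (Q₁ : Fin k₁ → Matrix (Fin n) (Fin n) ℝ) (q₁ : Fin k₁ → Fin n → ℝ) (α₁ : Fin k₁ → ℝ)
    (hQ₁ : ∀ i, (Q₁ i).IsSymm)
    (Q₂ : Fin k₂ → Matrix (Fin n) (Fin n) ℝ) (q₂ : Fin k₂ → Fin n → ℝ) (α₂ : Fin k₂ → ℝ)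
    (hQ₂ : ∀ j, (Q₂ j).IsSymm)
    (ψ₁ : Fin k₁ → (Fin n → ℝ) → ℝ)
    (hψ₁ : ∀ i x, ψ₁ i x = (1/2) * (x ⬝ᵥ (Q₁ i).mulVec x) + q₁ i ⬝ᵥ x + α₁ i)
    (ψ₂ : Fin k₂ → (Fin n → ℝ) → ℝ)
    (hψ₂ : ∀ j x, ψ₂ j x = (1/2) * (x ⬝ᵥ (Q₂ j).mulVec x) + q₂ j ⬝ᵥ x + α₂ j)
    (ψ : (Fin n → ℝ) → ℝ)
    (hψ : ∀ x, ψ x = finMax hk₁ (fun i => ψ₁ i x) - finMax hk₂ (fun j => ψ₂ j x))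
    (DF : Set (Fin n → ℝ))
    (hDF : DF = {x | DifferentiableAt ℝ (fun y => finMax hk₁ (fun i => ψ₁ i y)) x}) :
    (ψ '' ({x | DStat ψ X x} ∩ DF)).Finite := by
  classical
  obtain ⟨m, A, b, hXeq⟩ := hX
  have hψ₁' : ∀ i x, ψ₁ i x = quadF (Q₁ i) (q₁ i) (α₁ i) x := hψ₁
  have hψ₂' : ∀ j x, ψ₂ j x = quadF (Q₂ j) (q₂ j) (α₂ j) x := hψ₂
  set M₁ : (Fin n → ℝ) → ℝ := fun y => finMax hk₁ (fun i => ψ₁ i y) with hM₁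
  set M₂ : (Fin n → ℝ) → ℝ := fun y => finMax hk₂ (fun j => ψ₂ j y) with hM₂
  set S : Fin k₁ × Fin k₂ → Set ℝ := fun p =>
    {r : ℝ | ∃ x, Feas A b x ∧ (∀ z, Feas A b z →
        0 ≤ ((Q₁ p.1 - Q₂ p.2).mulVec x + (q₁ p.1 - q₂ p.2)) ⬝ᵥ (z - x))
      ∧ r = quadF (Q₁ p.1 - Q₂ p.2) (q₁ p.1 - q₂ p.2) (α₁ p.1 - α₂ p.2) x} with hS
  have hfin : (⋃ p, S p).Finite :=
    Set.finite_iUnion (fun p => qp_values_finite A b _ ((hQ₁ p.1).sub (hQ₂ p.2)) _ _)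
  apply hfin.subset
  rintro r ⟨xb, ⟨hstat, hdfx⟩, rfl⟩
  obtain ⟨hxX, hdd⟩ := hstat
  have hfeas : Feas A b xb := by rw [hXeq] at hxX; exact hxX
  obtain ⟨i₀, -, hi₀⟩ := Finset.exists_mem_eq_sup'
    (Finset.univ_nonempty_iff.mpr ⟨⟨0, hk₁⟩⟩) (fun i => ψ₁ i xb)
  obtain ⟨j₀, -, hj₀⟩ := Finset.exists_mem_eq_sup'
    (Finset.univ_nonempty_iff.mpr ⟨⟨0, hk₂⟩⟩) (fun j => ψ₂ j xb)
  have hM₁x : M₁ xb = quadF (Q₁ i₀) (q₁ i₀) (α₁ i₀) xb := by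
    rw [hM₁]; show finMax hk₁ (fun i => ψ₁ i xb) = _
    rw [finMax]; exact (hi₀).trans (hψ₁' i₀ xb)
  have hM₂x : M₂ xb = quadF (Q₂ j₀) (q₂ j₀) (α₂ j₀) xb := by
    rw [hM₂]; show finMax hk₂ (fun j => ψ₂ j xb) = _
    rw [finMax]; exact (hj₀).trans (hψ₂' j₀ xb)
  have hdiff : DifferentiableAt ℝ M₁ xb := by
    rw [hDF] at hdfx; exact hdfx
  set g := fderiv ℝ M₁ xb with hg
  -- lower bound on directional derivative of M₁ by gradient of active piece
  have hglower : ∀ v, ((Q₁ i₀).mulVec xb + q₁ i₀) ⬝ᵥ v ≤ g v := by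
    intro v
    have t1 := qslope (hQ₁ i₀) (q₁ i₀) (α₁ i₀) xb v
    have t2 := fderiv_slope hdiff v
    refine le_of_tendsto_of_tendsto t1 t2 ?_
    filter_upwards [self_mem_nhdsWithin] with δ (hδ : (0:ℝ) < δ)
    have h1 : quadF (Q₁ i₀) (q₁ i₀) (α₁ i₀) (xb + δ • v) ≤ M₁ (xb + δ • v) := by
      rw [hM₁, ← hψ₁' i₀]
      show _ ≤ finMax hk₁ (fun i => ψ₁ i (xb + δ • v))
      rw [finMax]
      exact Finset.le_sup' (fun i => ψ₁ i (xb + δ • v)) (Finset.mem_univ i₀)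
    have hnum : quadF (Q₁ i₀) (q₁ i₀) (α₁ i₀) (xb + δ • v) - quadF (Q₁ i₀) (q₁ i₀) (α₁ i₀) xb
        ≤ M₁ (xb + δ • v) - M₁ xb := by rw [hM₁x]; linarith
    gcongr
  have hgle : ∀ v, g v ≤ ((Q₁ i₀).mulVec xb + q₁ i₀) ⬝ᵥ v := by
    intro v
    have h := hglower (-v)
    rw [dotProduct_neg, g.map_neg] at h
    linarith
  refine Set.mem_iUnion.mpr ⟨⟨i₀, j₀⟩, xb, hfeas, ?_, ?_⟩
  · -- stationarity of the DC quadratic at xb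
    intro z hz
    have hzX : z ∈ X := by rw [hXeq]; exact hz
    obtain ⟨L, hLd, hL0⟩ := hdd z hzX
    set v : Fin n → ℝ := z - xb with hv
    have t2 : Tendsto (fun δ : ℝ => (M₁ (xb + δ • v) - M₁ xb) / δ
          - (quadF (Q₂ j₀) (q₂ j₀) (α₂ j₀) (xb + δ • v) - quadF (Q₂ j₀) (q₂ j₀) (α₂ j₀) xb) / δ)
        (𝓝[>] 0) (𝓝 (g v - ((Q₂ j₀).mulVec xb + q₂ j₀) ⬝ᵥ v)) :=
      (fderiv_slope hdiff v).sub (qslope (hQ₂ j₀) (q₂ j₀) (α₂ j₀) xb v)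
    have hL : Tendsto (fun δ : ℝ => (ψ (xb + δ • v) - ψ xb) / δ) (𝓝[>] 0) (𝓝 L) := hLd
    have hcmp : ∀ᶠ δ : ℝ in 𝓝[>] (0:ℝ), (ψ (xb + δ • v) - ψ xb) / δ
        ≤ (M₁ (xb + δ • v) - M₁ xb) / δ
          - (quadF (Q₂ j₀) (q₂ j₀) (α₂ j₀) (xb + δ • v) - quadF (Q₂ j₀) (q₂ j₀) (α₂ j₀) xb) / δ := by
      filter_upwards [self_mem_nhdsWithin] with δ (hδ : (0:ℝ) < δ)
      have h3 : quadF (Q₂ j₀) (q₂ j₀) (α₂ j₀) (xb + δ • v) ≤ M₂ (xb + δ • v) := by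
        rw [hM₂, ← hψ₂' j₀]
        show _ ≤ finMax hk₂ (fun j => ψ₂ j (xb + δ • v))
        rw [finMax]
        exact Finset.le_sup' (fun j => ψ₂ j (xb + δ • v)) (Finset.mem_univ j₀)
      have e1 : ψ (xb + δ • v) = M₁ (xb + δ • v) - M₂ (xb + δ • v) := hψ _
      have e2 : ψ xb = M₁ xb - M₂ xb := hψ _
      have hnum : ψ (xb + δ • v) - ψ xb ≤ (M₁ (xb + δ • v) - M₁ xb)
          - (quadF (Q₂ j₀) (q₂ j₀) (α₂ j₀) (xb + δ • v) - quadF (Q₂ j₀) (q₂ j₀) (α₂ j₀) xb) := by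
        rw [e1, e2]; rw [hM₂x] at *; linarith
      calc (ψ (xb + δ • v) - ψ xb) / δ
          ≤ ((M₁ (xb + δ • v) - M₁ xb)
            - (quadF (Q₂ j₀) (q₂ j₀) (α₂ j₀) (xb + δ • v) - quadF (Q₂ j₀) (q₂ j₀) (α₂ j₀) xb)) / δ :=
            by gcongr
        _ = _ := (div_sub_div_same _ _ _).symm
    have hle : L ≤ g v - ((Q₂ j₀).mulVec xb + q₂ j₀) ⬝ᵥ v :=
      le_of_tendsto_of_tendsto hL t2 hcmp
    have hchain := hgle v
    have hexp : ((Q₁ i₀ - Q₂ j₀).mulVec xb + (q₁ i₀ - q₂ j₀)) ⬝ᵥ v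
        = ((Q₁ i₀).mulVec xb + q₁ i₀) ⬝ᵥ v - ((Q₂ j₀).mulVec xb + q₂ j₀) ⬝ᵥ v := by
      simp only [Matrix.sub_mulVec, add_dotProduct, sub_dotProduct]
      ring
    rw [hexp]
    linarith
  · -- value of ψ at xb
    have : ψ xb = M₁ xb - M₂ xb := hψ _
    rw [this, hM₁x, hM₂x]
    simp only [quadF, Matrix.sub_mulVec, dotProduct_sub, sub_dotProduct]
    ring
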